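/- arXiv:2406.06936 — 3 statements merged into one kernel-verified Lean document; each statement's English description precedes it below -/
import Mathlib

section
/- Let v₁, …, v_k ∈ S^{n-1} ⊆ ℝ^n be linearly independent unit vectors with k ≥ 2, and let C = cone(v₁, …, v_k) be the simplicial cone they generate. Let H ⊆ ℝ^n be a linear hyperplane containing v₂, …, v_k, and let h = d(v₁, H) > 0 be the Euclidean distance from v₁ to H. Let X be a random point distributed uniformly on C ∩ B^n (with respect to the k-dimensional Hausdorff measure restricted to C ∩ B^n, normalized to a probability measure), where B^n is the closed unit ball. Then for every ε > 0, P(d(X, H) ≤ ε) ≤ ((1+ε)^k − 1)/h. -/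
open MeasureTheory

noncomputable section

/-- The simplicial cone generated by the vectors `v 0, …, v (k-1)`. -/
def simplicialCone {n k : ℕ} (v : Fin k → EuclideanSpace ℝ (Fin n)) :
    Set (EuclideanSpace ℝ (Fin n)) :=
  {x | ∃ lam : Fin k → ℝ, (∀ i, 0 ≤ lam i) ∧ x = ∑ i, lam i • v i}

/-- The uniform probability measure on a set `s`, with respect to the
`d`-dimensional Hausdorff measure. -/
def uniformOn {n : ℕ} (d : ℝ) (s : Set (EuclideanSpace ℝ (Fin n))) :
    Measure (EuclideanSpace ℝ (Fin n)) :=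
  ((μH[d] : Measure (EuclideanSpace ℝ (Fin n))) s)⁻¹ •
    (μH[d] : Measure (EuclideanSpace ℝ (Fin n))).restrict s

open Metric Set Pointwise
open scoped ENNReal NNReal

/-- Translation by an element of a submodule does not change the distance to it. -/
lemma aux_infDist_add_mem {n : ℕ} (H : Submodule ℝ (EuclideanSpace ℝ (Fin n)))
    (y a : EuclideanSpace ℝ (Fin n)) (ha : a ∈ H) :
    infDist (y + a) (H : Set _) = infDist y (H : Set _) := by
  have hiso : Isometry (fun z : EuclideanSpace ℝ (Fin n) => z + a) :=
    Isometry.of_dist_eq (by intro x y; simp [dist_eq_norm])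
  have himg : (fun z : EuclideanSpace ℝ (Fin n) => z + a) '' (H : Set _) = (H : Set _) := by
    ext z
    constructor
    · rintro ⟨w, hw, rfl⟩; exact H.add_mem hw ha
    · intro hz; exact ⟨z - a, H.sub_mem hz ha, by simp⟩
  conv_rhs => rw [← infDist_image (t := (H : Set _)) (x := y) hiso, himg]

/-- Distance to a submodule is positively homogeneous. -/
lemma aux_infDist_smul {n : ℕ} (H : Submodule ℝ (EuclideanSpace ℝ (Fin n)))
    (y : EuclideanSpace ℝ (Fin n)) (c : ℝ) (hc : 0 ≤ c) :
    infDist (c • y) (H : Set _) = c * infDist y (H : Set _) := by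
  rcases eq_or_lt_of_le hc with rfl | hc
  · simp [infDist_zero_of_mem H.zero_mem]
  · have himg : c • (H : Set (EuclideanSpace ℝ (Fin n))) = (H : Set _) := by
      ext z
      rw [Set.mem_smul_set_iff_inv_smul_mem₀ hc.ne']
      constructor
      · intro hz
        have := H.smul_mem c hz
        rwa [smul_inv_smul₀ hc.ne'] at this
      · intro hz; exact H.smul_mem _ hz
    conv_lhs => rw [← himg]
    rw [infDist_smul₀ hc.ne', Real.norm_of_nonneg hc.le]

/-- Distance formula: for a nonnegative combination, the distance to `H` is the
coefficient of `v i0` times the distance of `v i0` to `H`. -/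
lemma aux_dist_formula {n k : ℕ} (v : Fin k → EuclideanSpace ℝ (Fin n))
    (H : Submodule ℝ (EuclideanSpace ℝ (Fin n))) (i0 : Fin k)
    (hvH : ∀ i : Fin k, i ≠ i0 → v i ∈ H)
    (lam : Fin k → ℝ) (h0 : 0 ≤ lam i0) :
    infDist (∑ i, lam i • v i) (H : Set _) = lam i0 * infDist (v i0) (H : Set _) := by
  classical
  rw [Fintype.sum_eq_add_sum_compl i0]
  have ha : (∑ i ∈ {i0}ᶜ, lam i • v i) ∈ H :=
    Submodule.sum_mem _ fun i hi => H.smul_mem _ (hvH i (by simpa using hi))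
  rw [aux_infDist_add_mem H _ _ ha, aux_infDist_smul H _ _ h0]

set_option maxHeartbeats 1000000 in
/-- let `C = cone(v₁,…,v_k)` (`k ≥ 2`, the `vᵢ` linearly independent
unit vectors), let `H` be a linear hyperplane containing `v₂,…,v_k` with
`h = d(v₁,H) > 0`, and let `X` be uniform on `C ∩ Bⁿ` for the normalized
`k`-dimensional Hausdorff measure.  Then for all `ε > 0`,
`P(d(X,H) ≤ ε) ≤ ((1+ε)^k − 1)/h`. -/
theorem statement13 (n k : ℕ) (hk : 2 ≤ k)
    (v : Fin k → EuclideanSpace ℝ (Fin n))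
    (hunit : ∀ i, ‖v i‖ = 1) (hind : LinearIndependent ℝ v)
    (H : Submodule ℝ (EuclideanSpace ℝ (Fin n)))
    (hH : Module.finrank ℝ H = n - 1)
    (hvH : ∀ i : Fin k, i ≠ ⟨0, by omega⟩ → v i ∈ H)
    (h : ℝ)
    (hdef : h = Metric.infDist (v ⟨0, by omega⟩) (H : Set (EuclideanSpace ℝ (Fin n))))
    (hpos : 0 < h)
    (ε : ℝ) (hε : 0 < ε) :
    uniformOn (k : ℝ)
        (simplicialCone v ∩ Metric.closedBall (0 : EuclideanSpace ℝ (Fin n)) 1)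
        {x | Metric.infDist x (H : Set (EuclideanSpace ℝ (Fin n))) ≤ ε} ≤
      ENNReal.ofReal (((1 + ε) ^ k - 1) / h) := by
  classical
  set i0 : Fin k := ⟨0, by omega⟩ with hi0def
  set μ : Measure (EuclideanSpace ℝ (Fin n)) := μH[(k : ℝ)] with hμdef
  set S : Set (EuclideanSpace ℝ (Fin n)) :=
    simplicialCone v ∩ Metric.closedBall 0 1 with hSdef
  set D : Set (EuclideanSpace ℝ (Fin n)) :=
    {x | Metric.infDist x (H : Set _) ≤ ε} with hDdef
  have hDmeas : MeasurableSet D :=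
    (isClosed_le (continuous_infDist_pt _) continuous_const).measurableSet
  have hgoal : uniformOn (k : ℝ) S D = (μ S)⁻¹ * μ (D ∩ S) := by
    simp [uniformOn, Measure.restrict_apply hDmeas, hμdef]
  rw [hgoal]
  rcases le_or_gt h ε with hcase | hcase
  · -- easy case : the bound is at least one
    have h1 : (1 : ℝ) ≤ ((1 + ε) ^ k - 1) / h := by
      rw [le_div_iff₀ hpos]
      have h2 : (1 + ε : ℝ) ≤ (1 + ε) ^ k := le_self_pow₀ (by linarith) (by omega)
      linarith
    calc (μ S)⁻¹ * μ (D ∩ S) ≤ (μ S)⁻¹ * μ S := by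
          have hmono : μ (D ∩ S) ≤ μ S := measure_mono Set.inter_subset_right
          exact mul_le_mul_right hmono _
      _ ≤ 1 := by
          rcases eq_or_ne (μ S) 0 with h0 | h0
          · simp [h0]
          rcases eq_or_ne (μ S) ⊤ with htop | htop
          · simp [htop]
          · rw [ENNReal.inv_mul_cancel h0 htop]
      _ ≤ ENNReal.ofReal (((1 + ε) ^ k - 1) / h) := ENNReal.one_le_ofReal.mpr h1
  · -- main case : ε < h
    set B : ℝ := ((1 + ε) ^ k - 1) / h with hBdef
    set t : ℝ := ε / h with htdef
    have ht0 : 0 < t := div_pos hε hpos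
    have ht1 : t < 1 := (div_lt_one hpos).mpr hcase
    have hkpos : (0 : ℝ) < k := by positivity
    have hbern : 1 + (k : ℝ) * ε < (1 + ε) ^ k := by
      have hb := one_add_mul_self_lt_rpow_one_add (by linarith : (-1 : ℝ) ≤ ε) hε.ne'
        (by exact_mod_cast (by omega : 1 < k) : (1 : ℝ) < (k : ℕ))
      rwa [Real.rpow_natCast] at hb
    have hkt : (k : ℝ) * t < B := by
      rw [hBdef, lt_div_iff₀ hpos, htdef]
      calc (k : ℝ) * (ε / h) * h = k * ε := by field_simp
        _ < (1 + ε) ^ k - 1 := by linarith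
    have htB : t < min 1 (B / k) :=
      lt_min ht1 ((lt_div_iff₀' hkpos).mpr hkt)
    obtain ⟨t', htt', ht'B⟩ := exists_between htB
    have ht'0 : 0 < t' := ht0.trans htt'
    have ht'1 : t' < 1 := ht'B.trans_le (min_le_left _ _)
    have hkt' : (k : ℝ) * t' ≤ B := by
      have := ht'B.trans_le (min_le_right _ _)
      rw [lt_div_iff₀' hkpos] at this
      exact this.le
    set r : ℝ := 1 - t' with hrdef
    have hr0 : 0 < r := by rw [hrdef]; linarith
    have hr1 : r < 1 := by rw [hrdef]; linarith
    -- the linear parametrization of the cone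
    set L : (Fin k → ℝ) →ₗ[ℝ] EuclideanSpace ℝ (Fin n) :=
      { toFun := fun lam => ∑ i, lam i • v i
        map_add' := by intro a b; simp [add_smul, Finset.sum_add_distrib]
        map_smul' := by intro c a; simp [smul_smul, Finset.smul_sum] } with hLdef
    have hLapp : ∀ lam : Fin k → ℝ, L lam = ∑ i, lam i • v i := fun _ => rfl
    have hker : LinearMap.ker L = ⊥ := by
      rw [LinearMap.ker_eq_bot']
      intro m hm
      have := Fintype.linearIndependent_iff.mp hind m (by simpa [hLapp] using hm)
      funext i; exact this i
    obtain ⟨K, hK0, hKanti⟩ := L.exists_antilipschitzWith hker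
    have hLlip : LipschitzWith ‖L.toContinuousLinearMap‖₊ L :=
      L.toContinuousLinearMap.lipschitz
    have hkd : (0 : ℝ) ≤ (k : ℝ) := by positivity
    -- Hausdorff measure = volume on the parameter space
    have hHvol : (μH[(k : ℝ)] : Measure (Fin k → ℝ)) = volume := by
      have := hausdorffMeasure_pi_real (ι := Fin k)
      simpa using this
    -- μ S is finite
    have hStop : μ S ≠ ⊤ := by
      have hSsub : S ⊆ L '' Metric.closedBall 0 K := by
        rintro x ⟨⟨lam, hlam0, rfl⟩, hxball⟩
        refine ⟨lam, ?_, (hLapp lam).symm⟩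
        rw [Metric.mem_closedBall]
        have := hKanti.le_mul_dist lam 0
        simp only [hLapp, Pi.zero_apply, zero_smul, Finset.sum_const_zero] at this
        calc dist lam 0 ≤ K * dist (∑ i, lam i • v i) 0 := this
          _ ≤ K * 1 := by
              have : dist (∑ i, lam i • v i) 0 ≤ 1 := Metric.mem_closedBall.mp hxball
              exact mul_le_mul_of_nonneg_left this K.coe_nonneg
          _ = K := mul_one _
      have h1 : μ S ≤ (‖L.toContinuousLinearMap‖₊ : ℝ≥0∞) ^ (k : ℝ) *
          (μH[(k : ℝ)] : Measure (Fin k → ℝ)) (Metric.closedBall 0 K) :=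
        le_trans (measure_mono hSsub) (hLlip.hausdorffMeasure_image_le hkd _)
      have h2 : (μH[(k : ℝ)] : Measure (Fin k → ℝ)) (Metric.closedBall 0 K) ≠ ⊤ := by
        rw [hHvol]
        exact (isCompact_closedBall 0 _).measure_lt_top.ne
      exact ne_top_of_le_ne_top (ENNReal.mul_ne_top
        (ENNReal.rpow_ne_top_of_nonneg hkd ENNReal.coe_ne_top) h2) h1
    -- μ S is positive
    have hS0 : μ S ≠ 0 := by
      set σ : Set (Fin k → ℝ) :=
        (Set.univ.pi fun _ => Set.Ioi (0:ℝ)) ∩ {lam | ∑ i, lam i < 1} with hσdef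
      have hσopen : IsOpen σ :=
        (isOpen_set_pi Set.finite_univ fun _ _ => isOpen_Ioi).inter
          (isOpen_lt (continuous_finset_sum _ fun i _ => continuous_apply i) continuous_const)
      have hσne : σ.Nonempty := by
        refine ⟨fun _ => (1 : ℝ) / (2 * (k : ℝ)), ?_, ?_⟩
        · intro i _
          show (0 : ℝ) < (1 : ℝ) / (2 * (k : ℝ))
          positivity
        · simp only [Set.mem_setOf_eq, Finset.sum_const, Finset.card_univ, Fintype.card_fin,
            nsmul_eq_mul]
          rw [mul_one_div, div_lt_one (by positivity)]
          linarith
      have hσpos : (0 : ℝ≥0∞) < (μH[(k : ℝ)] : Measure (Fin k → ℝ)) σ := by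
        rw [hHvol]
        exact hσopen.measure_pos volume hσne
      have hsub : L '' σ ⊆ S := by
        rintro x ⟨lam, ⟨hlam1, hlam2⟩, rfl⟩
        have hlam0 : ∀ i, 0 ≤ lam i := fun i => (hlam1 i (Set.mem_univ i)).le
        refine ⟨⟨lam, hlam0, (hLapp lam).symm⟩, ?_⟩
        rw [Metric.mem_closedBall, dist_zero_right, hLapp]
        calc ‖∑ i, lam i • v i‖ ≤ ∑ i, ‖lam i • v i‖ := norm_sum_le _ _
          _ = ∑ i, lam i := by
              refine Finset.sum_congr rfl fun i _ => ?_
              rw [norm_smul, hunit i, mul_one, Real.norm_of_nonneg (hlam0 i)]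
          _ ≤ 1 := (Set.mem_setOf_eq ▸ hlam2).le
      intro hS0'
      have hL0 : (μH[(k : ℝ)] : Measure (EuclideanSpace ℝ (Fin n))) (L '' σ) = 0 :=
        le_antisymm (le_trans (measure_mono hsub) (le_of_eq hS0')) zero_le
      have := hKanti.le_hausdorffMeasure_image hkd σ
      rw [hL0, mul_zero] at this
      exact absurd (le_antisymm this zero_le) hσpos.ne'
    -- the shifted scaled copy of S
    set w : EuclideanSpace ℝ (Fin n) := t' • v i0 with hwdef
    set T : EuclideanSpace ℝ (Fin n) → EuclideanSpace ℝ (Fin n) := fun x => w + r • x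
      with hTdef
    -- measure of the image
    have hTS : μ (T '' S) = ENNReal.ofReal (r ^ k) * μ S := by
      have himage : T '' S = w +ᵥ (r • S) := by
        rw [← Set.image_vadd, ← Set.image_smul, Set.image_image]
        rfl
      have hnn : (‖r‖₊ ^ (k : ℝ) : ℝ≥0) = (r ^ k).toNNReal := by
        refine NNReal.coe_injective ?_
        rw [NNReal.coe_rpow, coe_nnnorm, Real.norm_of_nonneg hr0.le, Real.rpow_natCast,
          Real.coe_toNNReal _ (by positivity)]
      rw [himage, hμdef, hausdorffMeasure_vadd w (Or.inl hkd),
        Measure.hausdorffMeasure_smul₀ hkd hr0.ne' S, hnn, ENNReal.smul_def, smul_eq_mul,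
        ENNReal.ofReal]
    -- the image avoids D and stays in S
    have hTsub : T '' S ⊆ S \ D := by
      rintro y ⟨x, ⟨⟨lam, hlam0, rfl⟩, hxball⟩, rfl⟩
      have hxnorm : ‖∑ i, lam i • v i‖ ≤ 1 := by
        rw [← dist_zero_right]; exact Metric.mem_closedBall.mp hxball
      set mu : Fin k → ℝ := fun i => r * lam i + if i = i0 then t' else 0 with hmudef
      have hmu0 : ∀ i, 0 ≤ mu i := by
        intro i
        have h1 : 0 ≤ r * lam i := mul_nonneg hr0.le (hlam0 i)
        by_cases hii : i = i0
        · simp only [hmudef, if_pos hii]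
          linarith [ht'0.le]
        · simp only [hmudef, if_neg hii, add_zero]
          exact h1
      have hmusum : T (∑ i, lam i • v i) = ∑ i, mu i • v i := by
        show w + r • ∑ i, lam i • v i = _
        simp only [hmudef, add_smul, Finset.sum_add_distrib, ite_smul, zero_smul,
          Finset.sum_ite_eq', Finset.mem_univ, if_true, hwdef, Finset.smul_sum, smul_smul]
        rw [add_comm]
      constructor
      · constructor
        · exact ⟨mu, hmu0, hmusum⟩
        · rw [Metric.mem_closedBall, dist_zero_right, hTdef]
          calc ‖w + r • ∑ i, lam i • v i‖ ≤ ‖w‖ + ‖r • ∑ i, lam i • v i‖ := norm_add_le _ _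
            _ ≤ t' + r * 1 := by
                gcongr
                · rw [hwdef, norm_smul, hunit i0, mul_one, Real.norm_of_nonneg ht'0.le]
                · rw [norm_smul, Real.norm_of_nonneg hr0.le]
                  exact mul_le_mul_of_nonneg_left hxnorm hr0.le
            _ = 1 := by rw [hrdef]; ring
      · -- not in D
        intro hyD
        rw [hDdef, Set.mem_setOf_eq, hmusum,
          aux_dist_formula v H i0 hvH mu (hmu0 i0), ← hdef] at hyD
        have hmui0 : t' ≤ mu i0 := by
          have h1 : 0 ≤ r * lam i0 := mul_nonneg hr0.le (hlam0 i0)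
          have h2 : mu i0 = r * lam i0 + t' := by simp [hmudef]
          rw [h2]
          linarith only [h1]
        have h5 : t' * h ≤ mu i0 * h := mul_le_mul_of_nonneg_right hmui0 hpos.le
        have hth : t * h = ε := by
          rw [htdef, div_mul_cancel₀ _ hpos.ne']
        have h6 : t * h < t' * h := mul_lt_mul_of_pos_right htt' hpos
        linarith only [hyD, h5, hth, h6]
    -- combine
    have hsum : μ (D ∩ S) + μ (T '' S) ≤ μ S := by
      have h1 : μ (T '' S) ≤ μ (S \ D) := measure_mono hTsub
      have h2 : μ (S ∩ D) + μ (S \ D) = μ S := measure_inter_add_diff S hDmeas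
      calc μ (D ∩ S) + μ (T '' S) ≤ μ (S ∩ D) + μ (S \ D) := by
            rw [Set.inter_comm]; exact add_le_add le_rfl h1
        _ = μ S := h2
    set c : ℝ≥0∞ := ENNReal.ofReal (r ^ k) with hcdef
    have hcne : c ≠ ⊤ := ENNReal.ofReal_ne_top
    have hc1 : c ≤ 1 := by
      rw [hcdef, ← ENNReal.ofReal_one]
      exact ENNReal.ofReal_le_ofReal (pow_le_one₀ hr0.le hr1.le)
    have hDS : μ (D ∩ S) ≤ (1 - c) * μ S := by
      have h1 : μ (D ∩ S) ≤ μ S - c * μ S := by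
        refine ENNReal.le_sub_of_add_le_right (ENNReal.mul_ne_top hcne hStop) ?_
        rw [← hTS]; exact hsum
      have h2 : (1 - c) * μ S = μ S - c * μ S := by
        rw [ENNReal.sub_mul (fun _ _ => hStop), one_mul]
      rw [h2]; exact h1
    calc (μ S)⁻¹ * μ (D ∩ S) ≤ (μ S)⁻¹ * ((1 - c) * μ S) := by gcongr
      _ = (1 - c) * ((μ S)⁻¹ * μ S) := by ring
      _ = 1 - c := by rw [ENNReal.inv_mul_cancel hS0 hStop, mul_one]
      _ ≤ ENNReal.ofReal B := by
          rw [hcdef, ← ENNReal.ofReal_one, ← ENNReal.ofReal_sub _ (by positivity)]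
          refine ENNReal.ofReal_le_ofReal ?_
          have hbern2 : 1 - (k : ℝ) * t' ≤ r ^ k := by
            have := one_add_mul_le_pow (by linarith : (-2 : ℝ) ≤ -t') k
            rw [hrdef]
            calc 1 - (k : ℝ) * t' = 1 + (k : ℝ) * (-t') := by ring
              _ ≤ (1 + -t') ^ k := this
              _ = (1 - t') ^ k := by ring_nf
          linarith [hkt']
end
end

section
/- There is a universal constant c > 0 with the following property: for every n ≥ 1, every N ≥ 1, and all unit vectors g₁, …, g_N ∈ ℝ^n, the zonotope Z = {Σᵢ tᵢ·gᵢ : tᵢ ∈ [0,1]} satisfies gdiam(Z) ≥ c·N/√n. Moreover, for each n and N ≥ n there exist unit vectors g₁, …, g_N ∈ ℝ^n whose zonotope Z satisfies gdiam(Z) ≤ C·N/√n for a universal constant C; hence the minimal geometric diameter of a zonotope with N unit-length generators in ℝ^n is Θ(N/√n). -/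
noncomputable section

/-- The zonotope with generators `g 0, …, g (N-1)`: the Minkowski sum of the
segments `[0, g i]`. -/
def zonotope {n N : ℕ} (g : Fin N → EuclideanSpace ℝ (Fin n)) :
    Set (EuclideanSpace ℝ (Fin n)) :=
  (fun t : Fin N → ℝ => ∑ i, t i • g i) '' {t | ∀ i, t i ∈ Set.Icc (0 : ℝ) 1}

def eps (b : Bool) : ℝ := if b then 1 else -1

lemma sum_cube_split (n : ℕ) (F : (Fin (n+1) → Bool) → ℝ) :
    ∑ s : Fin (n+1) → Bool, F s = ∑ b : Bool, ∑ s : Fin n → Bool, F (Fin.cons b s) := by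
  rw [← Equiv.sum_comp (Fin.consEquiv (fun _ => Bool)) F, Fintype.sum_prod_type]
  rfl

lemma moments (n : ℕ) (a : Fin n → ℝ) :
    (∑ s : Fin n → Bool, (∑ j, eps (s j) * a j) ^ 2 = 2 ^ n * ∑ j, a j ^ 2) ∧
    (∑ s : Fin n → Bool, (∑ j, eps (s j) * a j) ^ 4 ≤ 3 * 2 ^ n * (∑ j, a j ^ 2) ^ 2) := by
  induction n with
  | zero => simp
  | succ n ih =>
    set x := a 0 with hx
    set a' : Fin n → ℝ := fun j => a j.succ with ha'
    obtain ⟨ih2, ih4⟩ := ih a'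
    set m' := ∑ j, a' j ^ 2 with hm'
    have hm'0 : 0 ≤ m' := Finset.sum_nonneg fun j _ => sq_nonneg _
    have hS : ∀ (b : Bool) (s : Fin n → Bool),
        (∑ j, eps ((Fin.cons b s : Fin (n+1) → Bool) j) * a j)
          = eps b * x + ∑ j, eps (s j) * a' j := by
      intro b s
      rw [Fin.sum_univ_succ]
      simp [ha', hx]
    have hRHS : ∑ j, a j ^ 2 = x ^ 2 + m' := by
      rw [Fin.sum_univ_succ]
    constructor
    · rw [sum_cube_split n (fun s => (∑ j, eps (s j) * a j) ^ 2), Fintype.sum_bool]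
      simp only [hS]
      have : ∀ s : Fin n → Bool,
          (eps true * x + ∑ j, eps (s j) * a' j) ^ 2
            + (eps false * x + ∑ j, eps (s j) * a' j) ^ 2
          = 2 * x ^ 2 + 2 * (∑ j, eps (s j) * a' j) ^ 2 := by
        intro s; simp [eps]; ring
      rw [← Finset.sum_add_distrib]
      rw [Finset.sum_congr rfl (fun s _ => this s)]
      rw [Finset.sum_add_distrib, Finset.sum_const, ← Finset.mul_sum, ih2, hRHS]
      simp [Finset.card_univ]
      ring
    · rw [sum_cube_split n (fun s => (∑ j, eps (s j) * a j) ^ 4), Fintype.sum_bool]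
      simp only [hS]
      have : ∀ s : Fin n → Bool,
          (eps true * x + ∑ j, eps (s j) * a' j) ^ 4
            + (eps false * x + ∑ j, eps (s j) * a' j) ^ 4
          = 2 * x ^ 4 + 12 * x ^ 2 * (∑ j, eps (s j) * a' j) ^ 2
              + 2 * (∑ j, eps (s j) * a' j) ^ 4 := by
        intro s; simp [eps]; ring
      rw [← Finset.sum_add_distrib]
      rw [Finset.sum_congr rfl (fun s _ => this s)]
      rw [Finset.sum_add_distrib, Finset.sum_add_distrib, Finset.sum_const,
        ← Finset.mul_sum, ← Finset.mul_sum, ih2, hRHS]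
      have h4 : ∑ s : Fin n → Bool, (∑ j, eps (s j) * a' j) ^ 4 ≤ 3 * 2 ^ n * m' ^ 2 := ih4
      simp only [Finset.card_univ, Fintype.card_fun, Fintype.card_bool, Fintype.card_fin,
        smul_eq_mul, nsmul_eq_mul]
      push_cast
      have hpow : (2:ℝ)^(n+1) = 2 * 2^n := by ring
      nlinarith [hpow, h4, mul_nonneg (pow_nonneg (by norm_num : (0:ℝ) ≤ 2) n) (pow_nonneg (sq_nonneg x) 2),
        mul_nonneg (mul_nonneg (pow_nonneg (by norm_num : (0:ℝ) ≤ 2) n) (sq_nonneg x)) hm'0]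

lemma khintchine (n : ℕ) (a : Fin n → ℝ) (hm : ∑ j, a j ^ 2 = 1) :
    (2:ℝ)^n / 2 ≤ ∑ s : Fin n → Bool, |∑ j, eps (s j) * a j| := by
  obtain ⟨h2, h4⟩ := moments n a
  rw [hm] at h2; rw [hm] at h4
  set S : (Fin n → Bool) → ℝ := fun s => ∑ j, eps (s j) * a j with hs
  set A := ∑ s : Fin n → Bool, |S s| with hA
  set B := ∑ s : Fin n → Bool, S s ^ 2 with hB
  set C := ∑ s : Fin n → Bool, S s ^ 4 with hC
  set D := ∑ s : Fin n → Bool, |S s| ^ 3 with hD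
  have hA0 : 0 ≤ A := Finset.sum_nonneg fun s _ => abs_nonneg _
  have hD0 : 0 ≤ D := Finset.sum_nonneg fun s _ => pow_nonneg (abs_nonneg _) 3
  have cs1 : B ^ 2 ≤ A * D := by
    have := Finset.sum_mul_sq_le_sq_mul_sq Finset.univ
      (fun s => Real.sqrt |S s|) (fun s => Real.sqrt (|S s| ^ 3))
    have e1 : ∀ s : Fin n → Bool,
        Real.sqrt |S s| * Real.sqrt (|S s| ^ 3) = S s ^ 2 := by
      intro s
      rw [← Real.sqrt_mul (abs_nonneg _)]
      have : |S s| * |S s| ^ 3 = (S s ^ 2) ^ 2 := by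
        rw [show |S s| * |S s| ^ 3 = (|S s| ^ 2) ^ 2 by ring, sq_abs]
      rw [this, Real.sqrt_sq (sq_nonneg _)]
    have e2 : ∀ s : Fin n → Bool, Real.sqrt |S s| ^ 2 = |S s| :=
      fun s => Real.sq_sqrt (abs_nonneg _)
    have e3 : ∀ s : Fin n → Bool, Real.sqrt (|S s| ^ 3) ^ 2 = |S s| ^ 3 :=
      fun s => Real.sq_sqrt (pow_nonneg (abs_nonneg _) 3)
    calc B ^ 2 = (∑ s : Fin n → Bool, Real.sqrt |S s| * Real.sqrt (|S s| ^ 3)) ^ 2 := by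
          rw [Finset.sum_congr rfl fun s _ => e1 s]
      _ ≤ (∑ s : Fin n → Bool, Real.sqrt |S s| ^ 2) * ∑ s : Fin n → Bool, Real.sqrt (|S s| ^ 3) ^ 2 := this
      _ = A * D := by
          rw [Finset.sum_congr rfl fun s _ => e2 s, Finset.sum_congr rfl fun s _ => e3 s]
  have cs2 : D ^ 2 ≤ B * C := by
    have := Finset.sum_mul_sq_le_sq_mul_sq Finset.univ
      (fun s => |S s|) (fun s => S s ^ 2)
    calc D ^ 2 = (∑ s : Fin n → Bool, |S s| * S s ^ 2) ^ 2 := by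
          congr 1
          refine Finset.sum_congr rfl fun s _ => ?_
          rw [← sq_abs (S s)]; ring
      _ ≤ (∑ s : Fin n → Bool, |S s| ^ 2) * ∑ s : Fin n → Bool, (S s ^ 2) ^ 2 := this
      _ = B * C := by
          congr 1
          · exact Finset.sum_congr rfl fun s _ => sq_abs _
          · exact Finset.sum_congr rfl fun s _ => by ring
  -- numeric conclusion
  have hBval : B = 2 ^ n := by simpa using h2
  have hCval : C ≤ 3 * 2 ^ n := by simpa using h4
  have hpow : (0:ℝ) < 2 ^ n := pow_pos (by norm_num) n
  have hDle : D ≤ 2 * 2 ^ n := by nlinarith [cs2, hBval, hCval, hD0, hpow]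
  show (2:ℝ)^n / 2 ≤ A
  nlinarith [cs1, hDle, hA0, hpow]

lemma zonotope_bounded {n N : ℕ} (g : Fin N → EuclideanSpace ℝ (Fin n))
    (hg : ∀ i, ‖g i‖ = 1) : Bornology.IsBounded (zonotope g) := by
  apply Bornology.IsBounded.subset (Metric.isBounded_closedBall (x := (0 : EuclideanSpace ℝ (Fin n))) (r := N))
  rintro x ⟨t, ht, rfl⟩
  simp only [Metric.mem_closedBall, dist_zero_right]
  calc ‖∑ i, t i • g i‖ ≤ ∑ i, ‖t i • g i‖ := norm_sum_le _ _
    _ ≤ ∑ i : Fin N, 1 := by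
        refine Finset.sum_le_sum fun i _ => ?_
        rw [norm_smul, hg i, mul_one, Real.norm_eq_abs,
          abs_of_nonneg (ht i).1]
        exact (ht i).2
    _ = N := by simp

lemma lower_bound (n N : ℕ) (hn : 1 ≤ n) (hN : 1 ≤ N)
    (g : Fin N → EuclideanSpace ℝ (Fin n)) (hg : ∀ i, ‖g i‖ = 1) :
    (1/2 : ℝ) * N / Real.sqrt n ≤ Metric.diam (zonotope g) := by
  classical
  set P : Fin N → (Fin n → Bool) → ℝ := fun i s => ∑ j, eps (s j) * g i j with hP
  have hki : ∀ i, (2:ℝ)^n / 2 ≤ ∑ s : Fin n → Bool, |P i s| := by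
    intro i
    apply khintchine
    have h := EuclideanSpace.norm_eq (g i)
    rw [hg i] at h
    have h2 : ∑ j, ‖g i j‖ ^ 2 = 1 := by
      have := congrArg (· ^ 2) h
      simpa [Real.sq_sqrt (Finset.sum_nonneg fun j _ => sq_nonneg _)] using this.symm
    simpa [sq_abs] using h2
  -- find a good sign vector s₀
  have hsum : ∑ s : Fin n → Bool, ((N:ℝ) / 2) ≤ ∑ s : Fin n → Bool, ∑ i, |P i s| := by
    rw [Finset.sum_comm]
    calc ∑ _s : Fin n → Bool, ((N:ℝ)/2) = ∑ _i : Fin N, (2:ℝ)^n/2 := by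
          simp [Finset.sum_const, Finset.card_univ]
          push_cast
          ring
      _ ≤ ∑ i, ∑ s : Fin n → Bool, |P i s| := Finset.sum_le_sum fun i _ => hki i
  obtain ⟨s₀, -, hs₀⟩ := Finset.exists_le_of_sum_le (Finset.univ_nonempty) hsum
  -- construct the two points
  set w : EuclideanSpace ℝ (Fin n) := WithLp.toLp 2 (fun j => eps (s₀ j)) with hw
  have hwnorm : ‖w‖ = Real.sqrt n := by
    rw [EuclideanSpace.norm_eq]
    congr 1
    have : ∀ j : Fin n, ‖w j‖ ^ 2 = 1 := by
      intro j; rw [hw]; cases s₀ j <;> simp [eps]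
    rw [Finset.sum_congr rfl fun j _ => this j]
    simp
  set t : Fin N → ℝ := fun i => if 0 ≤ P i s₀ then 1 else 0 with ht
  set u : Fin N → ℝ := fun i => if 0 ≤ P i s₀ then 0 else 1 with hu
  have hxmem : (∑ i, t i • g i) ∈ zonotope g := by
    exact ⟨t, fun i => by by_cases h : 0 ≤ P i s₀ <;> simp [ht, h], rfl⟩
  have hymem : (∑ i, u i • g i) ∈ zonotope g := by
    exact ⟨u, fun i => by by_cases h : 0 ≤ P i s₀ <;> simp [hu, h], rfl⟩
  set v : EuclideanSpace ℝ (Fin n) := ∑ i, (t i - u i) • g i with hv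
  have hvd : (∑ i, t i • g i) - (∑ i, u i • g i) = v := by
    rw [hv, ← Finset.sum_sub_distrib]
    exact Finset.sum_congr rfl fun i _ => (sub_smul _ _ _).symm
  have hinner_gi : ∀ i, (inner ℝ (g i) w : ℝ) = P i s₀ := by
    intro i
    rw [PiLp.inner_apply]
    exact Finset.sum_congr rfl fun j _ => by
      simp [hw, RCLike.inner_apply, mul_comm]
  have hinner : (inner ℝ v w : ℝ) = ∑ i, |P i s₀| := by
    rw [hv, sum_inner]
    refine Finset.sum_congr rfl fun i _ => ?_
    rw [real_inner_smul_left, hinner_gi i]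
    by_cases h : 0 ≤ P i s₀
    · rw [abs_of_nonneg h]; simp [ht, hu, h]
    · rw [abs_of_neg (lt_of_not_ge h)]; simp [ht, hu, h]
  have hvnorm : (N:ℝ)/2 ≤ ‖v‖ * Real.sqrt n := by
    calc (N:ℝ)/2 ≤ ∑ i, |P i s₀| := hs₀
      _ = inner ℝ v w := hinner.symm
      _ ≤ ‖v‖ * ‖w‖ := real_inner_le_norm v w
      _ = ‖v‖ * Real.sqrt n := by rw [hwnorm]
  have hsqrtpos : 0 < Real.sqrt n := Real.sqrt_pos.mpr (by exact_mod_cast hn)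
  have hdist : ‖v‖ ≤ Metric.diam (zonotope g) := by
    have := Metric.dist_le_diam_of_mem (zonotope_bounded g hg) hxmem hymem
    rwa [dist_eq_norm, hvd] at this
  rw [div_le_iff₀ hsqrtpos] at *
  calc (1/2 : ℝ) * N = (N:ℝ)/2 := by ring
    _ ≤ ‖v‖ * Real.sqrt n := hvnorm
    _ ≤ Metric.diam (zonotope g) * Real.sqrt n := by
        exact mul_le_mul_of_nonneg_right hdist hsqrtpos.le

lemma upper_bound (n N : ℕ) (hn : 1 ≤ n) (hnN : n ≤ N) :
    ∃ g : Fin N → EuclideanSpace ℝ (Fin n), (∀ i, ‖g i‖ = 1) ∧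
      Metric.diam (zonotope g) ≤ 2 * N / Real.sqrt n := by
  classical
  have hnpos : 0 < n := hn
  set jmap : Fin N → Fin n := fun i => ⟨i.val % n, Nat.mod_lt _ hnpos⟩ with hjm
  refine ⟨fun i => EuclideanSpace.single (jmap i) 1, fun i => by
    rw [EuclideanSpace.norm_single]; norm_num, ?_⟩
  have hnR : (0:ℝ) < n := by exact_mod_cast hnpos
  have hsq : (0:ℝ) < Real.sqrt n := Real.sqrt_pos.mpr hnR
  -- cardinality bound
  have hcard : ∀ k : Fin n,
      ((Finset.univ.filter fun i : Fin N => k = jmap i).card : ℝ) ≤ 2 * N / n := by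
    intro k
    have h1 : (Finset.univ.filter fun i : Fin N => k = jmap i).card ≤ N / n + 1 := by
      have hmain := Finset.card_le_card_of_injOn
        (s := Finset.univ.filter fun i : Fin N => k = jmap i)
        (t := (Finset.univ : Finset (Fin (N / n + 1))))
        (fun i : Fin N => (⟨i.val / n, by
          have : i.val / n ≤ N / n := Nat.div_le_div_right i.isLt.le
          omega⟩ : Fin (N / n + 1)))
        (fun i _ => Finset.mem_univ _) ?inj
      · simpa using hmain
      case inj =>
        intro i hi j hj hij
        simp only [Finset.mem_coe, Finset.mem_filter] at hi hj
        have hmod : i.val % n = j.val % n := congrArg Fin.val (hi.2.symm.trans hj.2)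
        have hdiv : i.val / n = j.val / n := congrArg Fin.val hij
        have e1 := Nat.div_add_mod i.val n
        have e2 := Nat.div_add_mod j.val n
        apply Fin.ext
        rw [hdiv, hmod] at e1
        exact e1.symm.trans e2
    calc ((Finset.univ.filter fun i : Fin N => k = jmap i).card : ℝ)
        ≤ ((N / n + 1 : ℕ) : ℝ) := by exact_mod_cast h1
      _ = ((N / n : ℕ) : ℝ) + 1 := by push_cast; ring
      _ ≤ (N : ℝ) / n + (N : ℝ) / n := by
          gcongr
          · exact Nat.cast_div_le
          · exact (one_le_div hnR).mpr (by exact_mod_cast hnN)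
      _ = 2 * N / n := by ring
  -- diameter bound
  apply Metric.diam_le_of_forall_dist_le (by positivity)
  rintro x ⟨t, ht, rfl⟩ y ⟨u, hu, rfl⟩
  rw [dist_eq_norm]
  set d : Fin N → ℝ := fun i => t i - u i with hd
  have hdiff : (∑ i, t i • EuclideanSpace.single (jmap i) (1:ℝ))
      - (∑ i, u i • EuclideanSpace.single (jmap i) (1:ℝ))
      = ∑ i, d i • EuclideanSpace.single (jmap i) (1:ℝ) := by
    rw [← Finset.sum_sub_distrib]
    exact Finset.sum_congr rfl fun i _ => (sub_smul _ _ _).symm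
  rw [hdiff]
  have hdle : ∀ i, |d i| ≤ 1 := by
    intro i
    rw [hd, abs_sub_le_iff]
    constructor
    · linarith [(ht i).2, (hu i).1]
    · linarith [(ht i).1, (hu i).2]
  -- coordinates
  have hcoord : ∀ k : Fin n,
      |(∑ i, d i • EuclideanSpace.single (jmap i) (1:ℝ)) k| ≤ 2 * N / n := by
    intro k
    have happ : (∑ i, d i • EuclideanSpace.single (jmap i) (1:ℝ)) k
        = ∑ i, d i * (if k = jmap i then 1 else 0) := by
      rw [WithLp.ofLp_sum, Finset.sum_apply]
      exact Finset.sum_congr rfl fun i _ => by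
        rw [PiLp.smul_apply, EuclideanSpace.single_apply, smul_eq_mul]
    rw [happ]
    calc |∑ i, d i * (if k = jmap i then (1:ℝ) else 0)|
        ≤ ∑ i, |d i * (if k = jmap i then (1:ℝ) else 0)| := Finset.abs_sum_le_sum_abs _ _
      _ ≤ ∑ i, (if k = jmap i then (1:ℝ) else 0) := by
          refine Finset.sum_le_sum fun i _ => ?_
          rw [abs_mul]
          by_cases h : k = jmap i <;> simp [h]
          exact hdle i
      _ = ((Finset.univ.filter fun i : Fin N => k = jmap i).card : ℝ) := by
          rw [Finset.sum_boole]
      _ ≤ 2 * N / n := hcard k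
  rw [EuclideanSpace.norm_eq]
  have hbound : ∑ k : Fin n, ‖(∑ i, d i • EuclideanSpace.single (jmap i) (1:ℝ)) k‖ ^ 2
      ≤ (2 * N / Real.sqrt n) ^ 2 := by
    have heq : ((2 * N / Real.sqrt n) ^ 2 : ℝ) = n * (2 * N / n) ^ 2 := by
      rw [div_pow, Real.sq_sqrt hnR.le]
      field_simp
    rw [heq]
    calc ∑ k : Fin n, ‖(∑ i, d i • EuclideanSpace.single (jmap i) (1:ℝ)) k‖ ^ 2
        ≤ ∑ _k : Fin n, (2 * (N:ℝ) / n) ^ 2 := by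
          refine Finset.sum_le_sum fun k _ => ?_
          rw [Real.norm_eq_abs]
          exact pow_le_pow_left₀ (abs_nonneg _) (hcoord k) 2
      _ = n * (2 * N / n) ^ 2 := by
          rw [Finset.sum_const, Finset.card_univ, Fintype.card_fin, nsmul_eq_mul]
  calc Real.sqrt (∑ k : Fin n, ‖(∑ i, d i • EuclideanSpace.single (jmap i) (1:ℝ)) k‖ ^ 2)
      ≤ Real.sqrt ((2 * N / Real.sqrt n) ^ 2) := Real.sqrt_le_sqrt hbound
    _ = 2 * N / Real.sqrt n := Real.sqrt_sq (by positivity)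

/-- there is a universal constant `c > 0` such that every zonotope in
`ℝ^n` with `N ≥ 1` unit generators has geometric diameter at least `c·N/√n`;
moreover there is a universal constant `C > 0` such that for every `n` and `N ≥ n`
some zonotope with `N` unit generators has geometric diameter at most `C·N/√n`.
Hence the minimal geometric diameter of a zonotope with `N` unit generators in
`ℝ^n` is `Θ(N/√n)`. -/
theorem statement17 :
    ∃ c C : ℝ, 0 < c ∧ 0 < C ∧
      (∀ (n N : ℕ), 1 ≤ n → 1 ≤ N →
        ∀ g : Fin N → EuclideanSpace ℝ (Fin n), (∀ i, ‖g i‖ = 1) →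
          c * N / Real.sqrt n ≤ Metric.diam (zonotope g)) ∧
      (∀ (n N : ℕ), 1 ≤ n → n ≤ N →
        ∃ g : Fin N → EuclideanSpace ℝ (Fin n), (∀ i, ‖g i‖ = 1) ∧
          Metric.diam (zonotope g) ≤ C * N / Real.sqrt n) := by
  refine ⟨1/2, 2, by norm_num, by norm_num, ?_, ?_⟩
  · intro n N hn hN g hg
    exact lower_bound n N hn hN g hg
  · intro n N hn hnN
    exact upper_bound n N hn hnN
end
end

section
/- Let n ≥ 2 and 1 ≤ k ≤ n−1. In ℝ^n, let u = Σ_{i=1}^{k} eᵢ − (k/n)·Σ_{i=1}^{n} eᵢ and w = e_{k+1} − e_k, where eᵢ are the standard basis vectors. Then ‖u‖₂ = √(k(n−k)/n), |⟨w, u⟩| = 1, and consequently |⟨w, u⟩| / (‖w‖₂·‖u‖₂) = √(n/(2k(n−k))). In particular, the minimum of this quantity over k ∈ {1, …, n−1} is Θ(1/√n): there are universal constants c, C > 0 with c/√n ≤ min_k √(n/(2k(n−k))) ≤ C/√n. -/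
open scoped RealInnerProductSpace

noncomputable section

lemma st18_sum_u_sq (n k : ℕ) (hkn : k + 1 ≤ n) :
    ∑ i ∈ Finset.range n, ((if i < k then (1:ℝ) else 0) - k / n)^2
      = k * (n - k) / n := by
  have hkn' : k ≤ n := le_trans (Nat.le_succ k) hkn
  have h0 : (0:ℝ) < n := by exact_mod_cast Nat.lt_of_lt_of_le (Nat.succ_pos k) hkn
  rw [Finset.range_eq_Ico, ← Finset.sum_Ico_consecutive _ (Nat.zero_le k) hkn']
  have h1 : ∑ i ∈ Finset.Ico 0 k, ((if i < k then (1:ℝ) else 0) - k / n)^2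
      = k * (1 - k/n)^2 := by
    rw [Finset.sum_congr rfl (fun i hi => by
      rw [if_pos (Finset.mem_Ico.1 hi).2]), Finset.sum_const, Nat.card_Ico,
      nsmul_eq_mul]
    simp
  have h2 : ∑ i ∈ Finset.Ico k n, ((if i < k then (1:ℝ) else 0) - k / n)^2
      = (n - k : ℕ) * (0 - k/n)^2 := by
    rw [Finset.sum_congr rfl (fun i hi => by
      rw [if_neg (not_lt.2 (Finset.mem_Ico.1 hi).1)]), Finset.sum_const, Nat.card_Ico,
      nsmul_eq_mul]
  rw [h1, h2, Nat.cast_sub hkn']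
  field_simp
  ring

lemma st18_inner_sum (n k : ℕ) (hkn : k + 1 ≤ n) (u : ℕ → ℝ) :
    ∑ i ∈ Finset.range n,
      ((if i = k then (1:ℝ) else 0) - (if i = k - 1 then 1 else 0)) * u i
      = u k - u (k-1) := by
  have hk : k ∈ Finset.range n := Finset.mem_range.2 hkn
  have hk' : k - 1 ∈ Finset.range n := Finset.mem_range.2 (lt_of_le_of_lt (Nat.sub_le k 1) hkn)
  simp only [sub_mul, ite_mul, one_mul, zero_mul]
  rw [Finset.sum_sub_distrib, Finset.sum_ite_eq' _ k u, Finset.sum_ite_eq' _ (k-1) u,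
    if_pos hk, if_pos hk']

lemma st18_sum_w_sq (n k : ℕ) (hk1 : 1 ≤ k) (hkn : k + 1 ≤ n) :
    ∑ i ∈ Finset.range n,
      ((if i = k then (1:ℝ) else 0) - (if i = k - 1 then 1 else 0))^2 = 2 := by
  have hk : k ∈ Finset.range n := Finset.mem_range.2 hkn
  have hk' : k - 1 ∈ Finset.range n := Finset.mem_range.2 (lt_of_le_of_lt (Nat.sub_le k 1) hkn)
  have : ∀ i ∈ Finset.range n,
      ((if i = k then (1:ℝ) else 0) - (if i = k - 1 then 1 else 0))^2
      = (if i = k then (1:ℝ) else 0) + (if i = k - 1 then 1 else 0) := by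
    intro i _
    split_ifs with h1 h2 h2 <;> norm_num <;> omega
  rw [Finset.sum_congr rfl this, Finset.sum_add_distrib,
    Finset.sum_ite_eq' _ k (fun _ => (1:ℝ)), Finset.sum_ite_eq' _ (k-1) (fun _ => (1:ℝ)),
    if_pos hk, if_pos hk']
  norm_num

lemma st18_pointwise (n k : ℕ) (hn : 2 ≤ n) (hk1 : 1 ≤ k) (hkn : k + 1 ≤ n)
    (u w : EuclideanSpace ℝ (Fin n))
    (hu : ∀ i : Fin n, u i = (if (i : ℕ) < k then (1 : ℝ) else 0) - (k : ℝ) / (n : ℝ))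
    (hw : ∀ i : Fin n, w i =
      (if (i : ℕ) = k then (1 : ℝ) else 0) - (if (i : ℕ) = k - 1 then (1 : ℝ) else 0)) :
    ‖u‖ = Real.sqrt ((k : ℝ) * ((n : ℝ) - (k : ℝ)) / (n : ℝ)) ∧
    |⟪w, u⟫| = 1 ∧
    |⟪w, u⟫| / (‖w‖ * ‖u‖) =
      Real.sqrt ((n : ℝ) / (2 * (k : ℝ) * ((n : ℝ) - (k : ℝ)))) := by
  have hkR : (1:ℝ) ≤ (k:ℝ) := by exact_mod_cast hk1
  have hnkR : (1:ℝ) ≤ (n:ℝ) - (k:ℝ) := by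
    have : (k:ℝ) + 1 ≤ n := by exact_mod_cast hkn
    linarith
  have hnR : (0:ℝ) < n := by positivity
  have hU : ‖u‖ = Real.sqrt ((k : ℝ) * ((n : ℝ) - (k : ℝ)) / (n : ℝ)) := by
    rw [EuclideanSpace.norm_eq]
    congr 1
    have : ∀ i : Fin n, ‖u i‖ ^ 2 = ((if (i:ℕ) < k then (1:ℝ) else 0) - k / n)^2 := by
      intro i; rw [hu i]; rw [Real.norm_eq_abs, sq_abs]
    rw [Finset.sum_congr rfl (fun i _ => this i),
      Fin.sum_univ_eq_sum_range (fun i => ((if i < k then (1:ℝ) else 0) - k / n)^2),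
      st18_sum_u_sq n k hkn]
  have hI : ⟪w, u⟫ = -1 := by
    rw [PiLp.inner_apply]
    simp only [RCLike.inner_apply, conj_trivial]
    have : ∀ i : Fin n, w i * u i =
        ((if (i:ℕ) = k then (1:ℝ) else 0) - (if (i:ℕ) = k - 1 then 1 else 0)) *
          ((if (i:ℕ) < k then (1:ℝ) else 0) - k / n) := by
      intro i; rw [hu i, hw i]
    rw [Finset.sum_congr rfl (fun i _ => mul_comm (u i) (w i))]
    rw [Finset.sum_congr rfl (fun i _ => this i),
      Fin.sum_univ_eq_sum_range (fun i =>
        ((if i = k then (1:ℝ) else 0) - (if i = k - 1 then 1 else 0)) *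
          ((if i < k then (1:ℝ) else 0) - k / n)),
      st18_inner_sum n k hkn (fun i => (if i < k then (1:ℝ) else 0) - k / n)]
    have h1 : ¬ (k < k) := lt_irrefl k
    have h2 : k - 1 < k := by omega
    simp only [h1, if_false, h2, if_true]
    ring
  have hW : ‖w‖ = Real.sqrt 2 := by
    rw [EuclideanSpace.norm_eq]
    congr 1
    have : ∀ i : Fin n, ‖w i‖ ^ 2 =
        ((if (i:ℕ) = k then (1:ℝ) else 0) - (if (i:ℕ) = k - 1 then 1 else 0))^2 := by
      intro i; rw [hw i, Real.norm_eq_abs, sq_abs]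
    rw [Finset.sum_congr rfl (fun i _ => this i),
      Fin.sum_univ_eq_sum_range (fun i =>
        ((if i = k then (1:ℝ) else 0) - (if i = k - 1 then 1 else 0))^2),
      st18_sum_w_sq n k hk1 hkn]
  have habs : |⟪w, u⟫| = 1 := by rw [hI]; norm_num
  refine ⟨hU, habs, ?_⟩
  rw [habs, hU, hW]
  have hpos : (0:ℝ) < (k:ℝ) * ((n:ℝ) - k) / n := by
    apply div_pos; nlinarith; exact hnR
  rw [← Real.sqrt_mul (by norm_num : (0:ℝ) ≤ 2), one_div, ← Real.sqrt_inv]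
  congr 1
  rw [eq_div_iff (by nlinarith : 2 * (k:ℝ) * ((n:ℝ) - k) ≠ 0), inv_mul_eq_div,
    div_eq_iff (by nlinarith : (2:ℝ) * ((k:ℝ) * ((n:ℝ) - k) / n) ≠ 0)]
  field_simp

/-- for `n ≥ 2` and `1 ≤ k ≤ n-1`, the vectors
`u = Σ_{i=1}^k eᵢ − (k/n)·Σ_{i=1}^n eᵢ` and `w = e_{k+1} − e_k` in `ℝ^n` satisfy
`‖u‖ = √(k(n−k)/n)`, `|⟨w,u⟩| = 1`, and `|⟨w,u⟩|/(‖w‖·‖u‖) = √(n/(2k(n−k)))`;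
moreover, the minimum over `k ∈ {1,…,n−1}` of the latter quantity is `Θ(1/√n)`. -/
theorem statement18 :
    ∃ c C : ℝ, 0 < c ∧ 0 < C ∧
      ∀ n : ℕ, 2 ≤ n →
        (∀ k : ℕ, 1 ≤ k → k ≤ n - 1 →
          ∀ u w : EuclideanSpace ℝ (Fin n),
            (∀ i : Fin n, u i = (if (i : ℕ) < k then (1 : ℝ) else 0) - (k : ℝ) / (n : ℝ)) →
            (∀ i : Fin n, w i =
              (if (i : ℕ) = k then (1 : ℝ) else 0) - (if (i : ℕ) = k - 1 then (1 : ℝ) else 0)) →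
            ‖u‖ = Real.sqrt ((k : ℝ) * ((n : ℝ) - (k : ℝ)) / (n : ℝ)) ∧
            |⟪w, u⟫| = 1 ∧
            |⟪w, u⟫| / (‖w‖ * ‖u‖) =
              Real.sqrt ((n : ℝ) / (2 * (k : ℝ) * ((n : ℝ) - (k : ℝ))))) ∧
        c / Real.sqrt n ≤
          sInf {x : ℝ | ∃ k : ℕ, 1 ≤ k ∧ k ≤ n - 1 ∧
            x = Real.sqrt ((n : ℝ) / (2 * (k : ℝ) * ((n : ℝ) - (k : ℝ))))} ∧
        sInf {x : ℝ | ∃ k : ℕ, 1 ≤ k ∧ k ≤ n - 1 ∧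
            x = Real.sqrt ((n : ℝ) / (2 * (k : ℝ) * ((n : ℝ) - (k : ℝ))))} ≤
          C / Real.sqrt n := by
  refine ⟨1, 3, one_pos, by norm_num, fun n hn => ?_⟩
  set S := {x : ℝ | ∃ k : ℕ, 1 ≤ k ∧ k ≤ n - 1 ∧
      x = Real.sqrt ((n : ℝ) / (2 * (k : ℝ) * ((n : ℝ) - (k : ℝ))))} with hS
  have hnR : (0:ℝ) < n := by positivity
  have hsn : (0:ℝ) < Real.sqrt n := Real.sqrt_pos.2 hnR
  have hlb : ∀ x ∈ S, 1 / Real.sqrt n ≤ x := by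
    rintro x ⟨k, hk1, hk2, rfl⟩
    have hkn : k + 1 ≤ n := by omega
    have hkR : (1:ℝ) ≤ (k:ℝ) := by exact_mod_cast hk1
    have hnkR : (1:ℝ) ≤ (n:ℝ) - (k:ℝ) := by
      have : (k:ℝ) + 1 ≤ n := by exact_mod_cast hkn
      linarith
    have h1 : (1:ℝ)/n ≤ (n:ℝ) / (2 * (k:ℝ) * ((n:ℝ) - k)) := by
      rw [div_le_div_iff₀ hnR (by nlinarith)]
      nlinarith [sq_nonneg ((n:ℝ) - 2*k)]
    calc 1 / Real.sqrt n = Real.sqrt (1/n) := by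
          rw [one_div, ← Real.sqrt_inv, inv_eq_one_div]
      _ ≤ _ := Real.sqrt_le_sqrt h1
  have hne : S.Nonempty := ⟨_, 1, le_refl 1, by omega, rfl⟩
  refine ⟨fun k hk1 hk2 u w hu hw =>
    st18_pointwise n k hn hk1 (by omega) u w hu hw, ?_, ?_⟩
  · simpa using le_csInf hne hlb
  · have hmem : Real.sqrt ((n:ℝ) / (2 * ((n/2 : ℕ):ℝ) * ((n:ℝ) - ((n/2 : ℕ):ℝ)))) ∈ S :=
      ⟨n/2, by omega, by omega, rfl⟩
    refine le_trans (csInf_le ⟨1 / Real.sqrt n, hlb⟩ hmem) ?_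
    have h1 : ((n:ℝ) - 1) / 2 ≤ ((n/2 : ℕ):ℝ) := by
      have : n ≤ 2 * (n/2) + 1 := by omega
      have := (Nat.cast_le (α := ℝ)).2 this
      push_cast at this ⊢
      linarith
    have h2 : (n:ℝ)/2 ≤ (n:ℝ) - ((n/2 : ℕ):ℝ) := by
      have : 2 * (n/2) ≤ n := by omega
      have := (Nat.cast_le (α := ℝ)).2 this
      push_cast at this ⊢
      linarith
    have hk1 : (1:ℝ) ≤ ((n/2:ℕ):ℝ) := by
      have : 1 ≤ n/2 := by omega
      exact_mod_cast this
    have hnR2 : (2:ℝ) ≤ n := by exact_mod_cast hn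
    have hq : (n:ℝ) / (2 * ((n/2 : ℕ):ℝ) * ((n:ℝ) - ((n/2 : ℕ):ℝ))) ≤ 9 / n := by
      rw [div_le_div_iff₀ (by nlinarith) hnR]
      nlinarith
    calc Real.sqrt ((n:ℝ) / (2 * ((n/2 : ℕ):ℝ) * ((n:ℝ) - ((n/2 : ℕ):ℝ))))
        ≤ Real.sqrt (9 / n) := Real.sqrt_le_sqrt hq
      _ = 3 / Real.sqrt n := by
          rw [Real.sqrt_div (by norm_num : (0:ℝ) ≤ 9),
            show Real.sqrt 9 = 3 by
              rw [show (9:ℝ) = 3^2 by norm_num, Real.sqrt_sq (by norm_num)]]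

end
end
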